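/- For every integer n ≥ 2, the sum over k from 2 to n of H_{n−k}/(k−1) equals H_{n+1}^2 − H_{n+1}^{(2)} − (2(2n+1)/(n(n+1)))·H_{n+1} + 2(3n^2+3n+1)/(n^2(n+1)^2). -/

import Mathlib

def H (n : ℕ) : ℚ := ∑ k ∈ Finset.range n, 1 / ((k : ℚ) + 1)

def H2 (n : ℕ) : ℚ := ∑ k ∈ Finset.range n, 1 / ((k : ℚ) + 1) ^ 2

lemma H_succ (n : ℕ) : H (n + 1) = H n + 1 / ((n : ℚ) + 1) := by
  simp [H, Finset.sum_range_succ]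

lemma H2_succ (n : ℕ) : H2 (n + 1) = H2 n + 1 / ((n : ℚ) + 1) ^ 2 := by
  simp [H2, Finset.sum_range_succ]

lemma refl_sum (m : ℕ) : ∑ i ∈ Finset.range m, (1 : ℚ) / ((m : ℚ) - i) = H m := by
  rw [← Finset.sum_range_reflect]
  unfold H
  apply Finset.sum_congr rfl
  intro i hi
  rw [Finset.mem_range] at hi
  have : ((m - 1 - i : ℕ) : ℚ) = (m : ℚ) - 1 - i := by
    have h1 : i ≤ m - 1 := by omega
    have h2 : 1 ≤ m := by omega
    push_cast [Nat.cast_sub h1, Nat.cast_sub h2]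
    ring
  rw [this]; ring_nf

lemma keyU (m : ℕ) : ∑ i ∈ Finset.range m, H i / ((m : ℚ) - i) = H m ^ 2 - H2 m := by
  induction m with
  | zero => simp [H, H2]
  | succ m ih =>
    rw [Finset.sum_range_succ', show H 0 = 0 from rfl]
    simp only [Nat.cast_zero, sub_zero, zero_div, add_zero, Nat.cast_add, Nat.cast_one]
    have step : ∀ i ∈ Finset.range m,
        H (i + 1) / (((m : ℚ) + 1) - (i + 1)) =
        H i / ((m : ℚ) - i) + (1/((m:ℚ)+1)) * (1/((i:ℚ)+1) + 1/((m:ℚ)-i)) := by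
      intro i hi
      rw [Finset.mem_range] at hi
      have h1 : (m : ℚ) - i ≠ 0 := by
        have : (i : ℚ) < m := by exact_mod_cast hi
        intro h; nlinarith
      have h2 : ((i : ℚ) + 1) ≠ 0 := by positivity
      have h3 : ((m : ℚ) + 1) ≠ 0 := by positivity
      rw [H_succ, show ((m : ℚ) + 1) - ((i : ℚ) + 1) = (m : ℚ) - i by ring]
      field_simp
      ring
    rw [Finset.sum_congr rfl step, Finset.sum_add_distrib, ih, ← Finset.mul_sum,
        Finset.sum_add_distrib, refl_sum]
    have : ∑ i ∈ Finset.range m, (1:ℚ)/((i:ℚ)+1) = H m := rfl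
    rw [this, H_succ, H2_succ]
    have h3 : ((m : ℚ) + 1) ≠ 0 := by positivity
    field_simp
    ring

theorem stmt_15 (n : ℕ) (hn : 2 ≤ n) :
    ∑ k ∈ Finset.Icc 2 n, H (n - k) / ((k : ℚ) - 1) =
      H (n + 1) ^ 2 - H2 (n + 1)
        - (2 * (2 * (n : ℚ) + 1) / ((n : ℚ) * ((n : ℚ) + 1))) * H (n + 1)
        + 2 * (3 * (n : ℚ) ^ 2 + 3 * (n : ℚ) + 1) / ((n : ℚ) ^ 2 * ((n : ℚ) + 1) ^ 2) := by
  obtain ⟨m, rfl⟩ : ∃ m, n = m + 2 := ⟨n - 2, by omega⟩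
  have reindex : ∑ k ∈ Finset.Icc 2 (m + 2), H (m + 2 - k) / ((k : ℚ) - 1) =
      ∑ i ∈ Finset.range (m + 1), H i / (((m : ℚ) + 1) - i) := by
    apply Finset.sum_nbij' (fun k => m + 2 - k) (fun i => m + 2 - i)
    · intro k hk; rw [Finset.mem_Icc] at hk; rw [Finset.mem_range]; omega
    · intro i hi; rw [Finset.mem_range] at hi; rw [Finset.mem_Icc]; omega
    · intro k hk; rw [Finset.mem_Icc] at hk; omega
    · intro i hi; rw [Finset.mem_range] at hi; omega
    · intro k hk; rw [Finset.mem_Icc] at hk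
      congr 1
      have : ((m + 2 - k : ℕ) : ℚ) = (m : ℚ) + 2 - k := by
        push_cast [Nat.cast_sub hk.2]; ring
      rw [this]; ring
  have key := keyU (m + 1)
  rw [H_succ, H2_succ] at key
  push_cast at key
  rw [reindex, key]
  rw [show m + 2 + 1 = m + 1 + 1 + 1 from rfl, H_succ (m+1+1), H_succ (m+1), H_succ m,
      H2_succ (m+1+1), H2_succ (m+1), H2_succ m]
  have h1 : ((m : ℚ) + 1) ≠ 0 := by positivity
  have h2 : ((m : ℚ) + 2) ≠ 0 := by positivity
  have h3 : ((m : ℚ) + 3) ≠ 0 := by positivity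
  push_cast
  field_simp
  ring
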